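/- Let O be a complete discrete valuation ring with uniformizer ϖ, M a finitely generated O-module, and f an O-linear endomorphism of M. Write M = M_ord ⊕ M_nil for the decomposition with f an automorphism of M_ord and f topologically nilpotent on M_nil. Then for every m ≥ 1, the natural map M_ord/ϖ^m M_ord → (M/ϖ^m M)_ord is an isomorphism, where (M/ϖ^m M)_ord denotes the analogous ordinary part of the induced endomorphism of M/ϖ^m M. -/

import Mathlib

/-- The submodule `ϖ^m · M` of a module `M` over `O`. -/
def piPowSub (O : Type*) [CommRing O] (ϖ : O) (m : ℕ) (M : Type*) [AddCommGroup M]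
    [Module O M] : Submodule O M :=
  (Ideal.span {ϖ} ^ m : Ideal O) • (⊤ : Submodule O M)

lemma mem_span_singleton_smul_iff' {O : Type*} [CommRing O] (a : O) {M : Type*}
    [AddCommGroup M] [Module O M] (N : Submodule O M) (x : M) :
    x ∈ (Ideal.span {a} : Ideal O) • N ↔ ∃ y ∈ N, a • y = x := by
  constructor
  · intro hx
    refine Submodule.smul_induction_on hx ?_ ?_
    · rintro r hr n hn
      obtain ⟨c, rfl⟩ := Ideal.mem_span_singleton'.mp hr
      exact ⟨c • n, N.smul_mem c hn, by rw [mul_comm, mul_smul]⟩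
    · rintro x y ⟨x', hx', rfl⟩ ⟨y', hy', rfl⟩
      exact ⟨x' + y', N.add_mem hx' hy', by rw [smul_add]⟩
  · rintro ⟨y, hy, rfl⟩
    exact Submodule.smul_mem_smul (Ideal.mem_span_singleton_self a) hy

lemma mem_pow_span_smul_iff' {O : Type*} [CommRing O] (a : O) (m : ℕ) {M : Type*}
    [AddCommGroup M] [Module O M] (N : Submodule O M) (x : M) :
    x ∈ (Ideal.span {a} ^ m : Ideal O) • N ↔ ∃ y ∈ N, a ^ m • y = x := by
  rw [Ideal.span_singleton_pow]
  exact mem_span_singleton_smul_iff' (a ^ m) N x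

theorem ordinary_part_mod_pi_pow {O : Type*} [CommRing O] [IsDomain O]
    [IsDiscreteValuationRing O] [IsAdicComplete (IsLocalRing.maximalIdeal O) O]
    (ϖ : O) (hϖ : Irreducible ϖ) (m : ℕ) (hm : 1 ≤ m)
    {M : Type*} [AddCommGroup M] [Module O M] [Module.Finite O M]
    (f : Module.End O M)
    (S T : Submodule O M)
    (hcompl : IsCompl S T) (hS : ∀ x ∈ S, f x ∈ S) (hT : ∀ x ∈ T, f x ∈ T)
    (hord : ∃ g : S →ₗ[O] S, (∀ x : S, (g x : M) = f (x : M)) ∧ Function.Bijective g)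
    (hnil : ∃ k : ℕ, 1 ≤ k ∧ ∀ x ∈ T, (f ^ k) x ∈ (Ideal.span {ϖ} : Ideal O) • T)
    (g : Module.End O (M ⧸ piPowSub O ϖ m M))
    (hg : ∀ x : M, g ((piPowSub O ϖ m M).mkQ x) = (piPowSub O ϖ m M).mkQ (f x))
    (S' T' : Submodule O (M ⧸ piPowSub O ϖ m M))
    (hcompl' : IsCompl S' T') (hS' : ∀ x ∈ S', g x ∈ S') (hT' : ∀ x ∈ T', g x ∈ T')
    (hord' : ∃ h : S' →ₗ[O] S',
      (∀ x : S', (h x : M ⧸ piPowSub O ϖ m M) = g (x : M ⧸ piPowSub O ϖ m M)) ∧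
        Function.Bijective h)
    (hnil' : ∃ k : ℕ, 1 ≤ k ∧ ∀ x ∈ T', (g ^ k) x ∈ (Ideal.span {ϖ} : Ideal O) • T') :
    Submodule.map (piPowSub O ϖ m M).mkQ S = S' ∧
      S ⊓ piPowSub O ϖ m M = (Ideal.span {ϖ} ^ m : Ideal O) • S := by
  classical
  set π := (piPowSub O ϖ m M).mkQ with hπdef
  obtain ⟨u, hu, hubij⟩ := hord
  obtain ⟨k, hk, hkT⟩ := hnil
  obtain ⟨h, hh, hhbij⟩ := hord'
  obtain ⟨k', hk', hkT'⟩ := hnil'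
  -- π kills piPowSub
  have hker : ∀ x ∈ piPowSub O ϖ m M, π x = 0 := fun x hx =>
    (Submodule.Quotient.mk_eq_zero _).mpr hx
  -- commutation of powers with π
  have hgn : ∀ (n : ℕ) (x : M), (g ^ n) (π x) = π ((f ^ n) x) := by
    intro n
    induction n with
    | zero => intro x; simp
    | succ n ih =>
      intro x
      rw [pow_succ, pow_succ, Module.End.mul_apply, Module.End.mul_apply, hg, ih]
  -- stability of S under powers of f
  have hSf : ∀ (n : ℕ), ∀ x ∈ S, (f ^ n) x ∈ S := by
    intro n
    induction n with
    | zero => intro x hx; simpa using hx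
    | succ n ih =>
      intro x hx
      rw [pow_succ, Module.End.mul_apply]
      exact ih _ (hS x hx)
  -- stability of S' under powers of g
  have hS'g : ∀ (n : ℕ), ∀ x ∈ S', (g ^ n) x ∈ S' := by
    intro n
    induction n with
    | zero => intro x hx; simpa using hx
    | succ n ih =>
      intro x hx
      rw [pow_succ, Module.End.mul_apply]
      exact ih _ (hS' x hx)
  -- topological nilpotency iterated on T
  have hC1 : ∀ j : ℕ, Submodule.map (f ^ (k * j)) T ≤ (Ideal.span {ϖ} ^ j : Ideal O) • T := by
    intro j
    induction j with
    | zero =>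
      simp only [Nat.mul_zero, pow_zero, Submodule.map_le_iff_le_comap]
      exact fun x hx => by simpa using hx
    | succ j ih =>
      have h1 : f ^ (k * (j + 1)) = (f ^ (k * j)) * (f ^ k) := by
        rw [← pow_add]; ring_nf
      rw [h1, Module.End.mul_eq_comp, Submodule.map_comp]
      have h2 : Submodule.map (f ^ k) T ≤ (Ideal.span {ϖ} : Ideal O) • T :=
        Submodule.map_le_iff_le_comap.mpr hkT
      calc Submodule.map (f ^ (k * j)) (Submodule.map (f ^ k) T)
          ≤ Submodule.map (f ^ (k * j)) ((Ideal.span {ϖ} : Ideal O) • T) :=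
            Submodule.map_mono h2
        _ = (Ideal.span {ϖ} : Ideal O) • Submodule.map (f ^ (k * j)) T :=
            Submodule.map_smul'' _ _ _
        _ ≤ (Ideal.span {ϖ} : Ideal O) • ((Ideal.span {ϖ} ^ j : Ideal O) • T) :=
            smul_mono_right _ ih
        _ = (Ideal.span {ϖ} ^ (j + 1) : Ideal O) • T := by
            rw [← Submodule.smul_assoc, smul_eq_mul, pow_succ, mul_comm]
  -- topological nilpotency iterated on T'
  have hC2 : ∀ j : ℕ, Submodule.map (g ^ (k' * j)) T' ≤ (Ideal.span {ϖ} ^ j : Ideal O) • T' := by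
    intro j
    induction j with
    | zero =>
      simp only [Nat.mul_zero, pow_zero, Submodule.map_le_iff_le_comap]
      exact fun x hx => by simpa using hx
    | succ j ih =>
      have h1 : g ^ (k' * (j + 1)) = (g ^ (k' * j)) * (g ^ k') := by
        rw [← pow_add]; ring_nf
      rw [h1, Module.End.mul_eq_comp, Submodule.map_comp]
      have h2 : Submodule.map (g ^ k') T' ≤ (Ideal.span {ϖ} : Ideal O) • T' :=
        Submodule.map_le_iff_le_comap.mpr hkT'
      calc Submodule.map (g ^ (k' * j)) (Submodule.map (g ^ k') T')
          ≤ Submodule.map (g ^ (k' * j)) ((Ideal.span {ϖ} : Ideal O) • T') :=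
            Submodule.map_mono h2
        _ = (Ideal.span {ϖ} : Ideal O) • Submodule.map (g ^ (k' * j)) T' :=
            Submodule.map_smul'' _ _ _
        _ ≤ (Ideal.span {ϖ} : Ideal O) • ((Ideal.span {ϖ} ^ j : Ideal O) • T') :=
            smul_mono_right _ ih
        _ = (Ideal.span {ϖ} ^ (j + 1) : Ideal O) • T' := by
            rw [← Submodule.smul_assoc, smul_eq_mul, pow_succ, mul_comm]
  -- ϖ^m kills the quotient
  have hQ0 : ∀ q : M ⧸ piPowSub O ϖ m M, ϖ ^ m • q = 0 := by
    intro q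
    obtain ⟨x, rfl⟩ := (piPowSub O ϖ m M).mkQ_surjective q
    rw [← map_smul]
    exact hker _ ((mem_pow_span_smul_iff' ϖ m ⊤ _).mpr ⟨x, trivial, rfl⟩)
  -- ϖ^m • T' is zero
  have hT'0 : ∀ q ∈ (Ideal.span {ϖ} ^ m : Ideal O) • T', q = 0 := by
    intro q hq
    obtain ⟨y, _, rfl⟩ := (mem_pow_span_smul_iff' ϖ m T' q).mp hq
    exact hQ0 y
  -- π kills ϖ^m • T
  have hT0 : ∀ x ∈ (Ideal.span {ϖ} ^ m : Ideal O) • T, π x = 0 := by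
    intro x hx
    obtain ⟨y, _, rfl⟩ := (mem_pow_span_smul_iff' ϖ m T x).mp hx
    exact hker _ ((mem_pow_span_smul_iff' ϖ m ⊤ _).mpr ⟨y, trivial, rfl⟩)
  -- surjectivity of powers of g on π(S)
  have hsurjS : ∀ (n : ℕ), ∀ q ∈ Submodule.map π S, ∃ p ∈ Submodule.map π S, (g ^ n) p = q := by
    intro n
    induction n with
    | zero => intro q hq; exact ⟨q, hq, by simp⟩
    | succ n ih =>
      rintro q ⟨s, hs, rfl⟩
      obtain ⟨s₀, hs₀⟩ := hubij.2 ⟨s, hs⟩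
      have hfs : f (s₀ : M) = s := by rw [← hu s₀, hs₀]
      obtain ⟨p, hp, hpn⟩ := ih (π (s₀ : M)) ⟨(s₀ : M), s₀.2, rfl⟩
      refine ⟨p, hp, ?_⟩
      rw [pow_succ', Module.End.mul_apply, hpn, hg, hfs]
  -- surjectivity of powers of g on S'
  have hsurjS' : ∀ (n : ℕ), ∀ q ∈ S', ∃ p ∈ S', (g ^ n) p = q := by
    intro n
    induction n with
    | zero => intro q hq; exact ⟨q, hq, by simp⟩
    | succ n ih =>
      intro q hq
      obtain ⟨s₀, hs₀⟩ := hhbij.2 ⟨q, hq⟩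
      have hgs : g (s₀ : M ⧸ piPowSub O ϖ m M) = q := by rw [← hh s₀, hs₀]
      obtain ⟨p, hp, hpn⟩ := ih (s₀ : M ⧸ piPowSub O ϖ m M) s₀.2
      refine ⟨p, hp, ?_⟩
      rw [pow_succ', Module.End.mul_apply, hpn, hgs]
  -- full decompositions
  have htopQ : Submodule.map π S ⊔ Submodule.map π T = ⊤ := by
    rw [← Submodule.map_sup, codisjoint_iff.mp hcompl.codisjoint, Submodule.map_top,
      Submodule.range_mkQ]
  have htop' : S' ⊔ T' = ⊤ := codisjoint_iff.mp hcompl'.codisjoint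
  constructor
  · -- image of S equals S'
    apply le_antisymm
    · intro x hx
      obtain ⟨p, hp, hpx⟩ := hsurjS (k' * m) x hx
      have hpmem : p ∈ S' ⊔ T' := htop' ▸ Submodule.mem_top
      obtain ⟨s', hs', t', ht', rfl⟩ := Submodule.mem_sup.mp hpmem
      have h1 : (g ^ (k' * m)) t' = 0 :=
        hT'0 _ (hC2 m ⟨t', ht', rfl⟩)
      have : x = (g ^ (k' * m)) s' := by
        rw [← hpx, map_add, h1, add_zero]
      rw [this]
      exact hS'g _ s' hs'
    · intro x hx
      obtain ⟨p, hp, hpx⟩ := hsurjS' (k * m) x hx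
      have hpmem : p ∈ Submodule.map π S ⊔ Submodule.map π T := htopQ ▸ Submodule.mem_top
      obtain ⟨a, ha, b, hb, rfl⟩ := Submodule.mem_sup.mp hpmem
      obtain ⟨s, hs, rfl⟩ := ha
      obtain ⟨t, ht, rfl⟩ := hb
      have h1 : (g ^ (k * m)) (π t) = 0 := by
        rw [hgn]
        exact hT0 _ (hC1 m ⟨t, ht, rfl⟩)
      have : x = π ((f ^ (k * m)) s) := by
        rw [← hpx, map_add, h1, add_zero, hgn]
      rw [this]
      exact ⟨(f ^ (k * m)) s, hSf _ s hs, rfl⟩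
  · -- kernel computation
    apply le_antisymm
    · rintro x ⟨hxS, hxP⟩
      obtain ⟨y, _, rfl⟩ := (mem_pow_span_smul_iff' ϖ m ⊤ x).mp hxP
      have hy : y ∈ S ⊔ T := (codisjoint_iff.mp hcompl.codisjoint) ▸ Submodule.mem_top
      obtain ⟨s, hs, t, ht, rfl⟩ := Submodule.mem_sup.mp hy
      have h1 : ϖ ^ m • t ∈ S ⊓ T := by
        constructor
        · have : ϖ ^ m • t = ϖ ^ m • (s + t) - ϖ ^ m • s := by rw [smul_add]; abel
          rw [this]
          exact S.sub_mem hxS (S.smul_mem _ hs)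
        · exact T.smul_mem _ ht
      rw [disjoint_iff.mp hcompl.disjoint] at h1
      have h2 : ϖ ^ m • (s + t) = ϖ ^ m • s := by
        rw [smul_add, (Submodule.mem_bot O).mp h1, add_zero]
      rw [h2]
      exact (mem_pow_span_smul_iff' ϖ m S _).mpr ⟨s, hs, rfl⟩
    · intro x hx
      obtain ⟨y, hy, rfl⟩ := (mem_pow_span_smul_iff' ϖ m S x).mp hx
      exact ⟨S.smul_mem _ hy, (mem_pow_span_smul_iff' ϖ m ⊤ _).mpr ⟨y, trivial, rfl⟩⟩
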